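/- Fix L ≥ 0, c ≥ 1, and unit-norm-bounded vectors v₁, …, v_t ∈ ℝⁿ (‖v_i‖₂ ≤ 1). Define M₀ = 0 and M_i = (I - c⁻¹v_i v_iᵀ)M_{i-1}(I - c⁻¹v_i v_iᵀ) + L v_i v_iᵀ for i ≥ 1. Then 0 ⪯ M_i ⪯ LcI for all i ∈ [t]. -/

import Mathlib

open Matrix

private lemma psd_smul' {n : ℕ} {A : Matrix (Fin n) (Fin n) ℝ} (hA : A.PosSemidef)
    {r : ℝ} (hr : 0 ≤ r) : (r • A).PosSemidef := by
  rw [posSemidef_iff_dotProduct_mulVec]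
  constructor
  · show _ = _
    rw [conjTranspose_smul, hA.1.eq]
    simp
  intro x
  have := hA.dotProduct_mulVec_nonneg x
  simp only [smul_mulVec, dotProduct_smul, smul_eq_mul]
  exact mul_nonneg hr this

private lemma psd_vmv {n : ℕ} (v : Fin n → ℝ) : (vecMulVec v v).PosSemidef := by
  rw [posSemidef_iff_dotProduct_mulVec]
  constructor
  · ext i j
    simp [vecMulVec_apply, mul_comm]
  · intro x
    have : star x ⬝ᵥ (vecMulVec v v *ᵥ x) = (∑ k, v k * x k) ^ 2 := by
      simp only [dotProduct, mulVec, vecMulVec_apply, star_trivial, Finset.mul_sum]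
      rw [sq, Finset.sum_mul_sum]
      exact Finset.sum_congr rfl fun i _ => Finset.sum_congr rfl fun j _ => by ring
    rw [this]
    positivity

theorem covar_seq_psd_le {n t : ℕ}
    (L c : ℝ) (hc : 1 ≤ c) (hL : 0 ≤ L)
    (v : ℕ → Fin n → ℝ) (hv : ∀ i, ∑ k, v i k ^ 2 ≤ 1)
    (M : ℕ → Matrix (Fin n) (Fin n) ℝ)
    (hM0 : M 0 = 0)
    (hMrec : ∀ i : ℕ,
      M (i + 1) = (1 - c⁻¹ • vecMulVec (v (i + 1)) (v (i + 1))) * M i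
          * (1 - c⁻¹ • vecMulVec (v (i + 1)) (v (i + 1)))
        + L • vecMulVec (v (i + 1)) (v (i + 1))) :
    ∀ i ∈ Finset.Icc 1 t, (M i).PosSemidef ∧
      ((L * c) • (1 : Matrix (Fin n) (Fin n) ℝ) - M i).PosSemidef := by
  have hc0 : (0:ℝ) < c := lt_of_lt_of_le one_pos hc
  have key : ∀ i : ℕ, (M i).PosSemidef ∧
      ((L * c) • (1 : Matrix (Fin n) (Fin n) ℝ) - M i).PosSemidef := by
    intro i
    induction i with
    | zero =>
      rw [hM0]
      refine ⟨PosSemidef.zero, ?_⟩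
      rw [sub_zero]
      exact psd_smul' PosSemidef.one (mul_nonneg hL (le_of_lt hc0))
    | succ i ih =>
      set w := v (i + 1) with hw
      set V : Matrix (Fin n) (Fin n) ℝ := vecMulVec w w with hV
      set A : Matrix (Fin n) (Fin n) ℝ := 1 - c⁻¹ • V with hA
      set s : ℝ := ∑ k, w k ^ 2 with hs
      have hs0 : 0 ≤ s := Finset.sum_nonneg fun k _ => sq_nonneg _
      have hs1 : s ≤ 1 := hv (i + 1)
      have hVV : V * V = s • V := by
        ext a b
        simp only [hV, mul_apply, Matrix.smul_apply, vecMulVec_apply, smul_eq_mul, hs]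
        rw [Finset.sum_mul]
        apply Finset.sum_congr rfl
        intro k _
        ring
      have hVt : Vᵀ = V := by
        ext a b; simp [hV, vecMulVec_apply, mul_comm]
      have hAH : Aᴴ = A := by
        ext a b
        simp [hA, conjTranspose_apply, hV, vecMulVec_apply, mul_comm, Matrix.one_apply, eq_comm]
      have hVpsd : V.PosSemidef := psd_vmv w
      constructor
      · rw [hMrec i]
        refine PosSemidef.add ?_ (psd_smul' hVpsd hL)
        have := ih.1.mul_mul_conjTranspose_same A
        rwa [hAH] at this
      · have hiden : (L * c) • (1 : Matrix (Fin n) (Fin n) ℝ) - M (i + 1)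
            = A * ((L * c) • (1 : Matrix (Fin n) (Fin n) ℝ) - M i) * A
              + (L * (1 - c⁻¹ * s)) • V := by
          rw [hMrec i, ← hw, ← hV, ← hA]
          have hexp : A * ((L * c) • (1 : Matrix (Fin n) (Fin n) ℝ)) * A
              = (L * c) • (1 : Matrix (Fin n) (Fin n) ℝ)
                - (L * c * (2 * c⁻¹ - c⁻¹ * c⁻¹ * s)) • V := by
            simp only [hA, sub_mul, mul_sub, one_mul, mul_one, smul_mul_assoc,
              mul_smul_comm, hVV, smul_smul, smul_sub, sub_smul]
            module
          have : A * ((L * c) • (1 : Matrix (Fin n) (Fin n) ℝ) - M i) * A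
              = A * ((L * c) • (1 : Matrix (Fin n) (Fin n) ℝ)) * A - A * M i * A := by
            noncomm_ring
          rw [this, hexp]
          have hcc : c⁻¹ * c = 1 := inv_mul_cancel₀ (ne_of_gt hc0)
          have hscal : (L * c * (2 * c⁻¹ - c⁻¹ * c⁻¹ * s)) = 2 * L - L * c⁻¹ * s := by
            field_simp
          rw [hscal]
          have hscal2 : (L * (1 - c⁻¹ * s)) = L - L * c⁻¹ * s := by ring
          rw [hscal2]
          have hL2 : (L : ℝ) • V = L • V := rfl
          simp only [sub_smul]
          abel_nf
          module
        rw [hiden]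
        refine PosSemidef.add ?_ (psd_smul' hVpsd ?_)
        · have := ih.2.mul_mul_conjTranspose_same A
          rwa [hAH] at this
        · apply mul_nonneg hL
          have : c⁻¹ * s ≤ 1 := by
            calc c⁻¹ * s ≤ c⁻¹ * 1 := by
                  apply mul_le_mul_of_nonneg_left hs1 (le_of_lt (inv_pos.mpr hc0))
              _ = c⁻¹ := mul_one _
              _ ≤ 1 := by
                  rw [inv_le_one_iff₀]; right; exact hc
          linarith
  intro i _
  exact key i
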